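/- Let R be a commutative ring, A ∈ R^{n×n}, s < t ≤ n. Then adj(A^{(s+1)}_t) · A^{(s+1)}_t = δ_s^{t-s-1} δ_t · I, where A^{(s+1)}_t is the matrix of bordered (s+1)-minors of A restricted to indices s+1,…,t. -/

import Mathlib

open Matrix

/-- determinant of the `k × k` submatrix of `A` obtained by bordering the
upper-left `(k-1) × (k-1)` block with row `i` and column `j`. -/
def borderedMinor {R : Type*} [CommRing R] {n : ℕ} (A : Matrix (Fin n) (Fin n) R)
    (k : ℕ) (i j : Fin n) : R :=
  (Matrix.of fun p q : Fin k =>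
    A (if (p : ℕ) < k - 1 then ⟨p % n, Nat.mod_lt _ i.pos⟩ else i)
      (if (q : ℕ) < k - 1 then ⟨q % n, Nat.mod_lt _ j.pos⟩ else j)).det

/-- `δ_k`: upper-left `k × k` corner minor. -/
def cornerMinor {R : Type*} [CommRing R] {n : ℕ} (A : Matrix (Fin n) (Fin n) R)
    (k : ℕ) (hk : k ≤ n) : R :=
  (A.submatrix (Fin.castLE hk) (Fin.castLE hk)).det

set_option linter.unreachableTactic false
set_option linter.unusedTactic false

section Transfer
variable {R S : Type*} [CommRing R] [CommRing S] {n : ℕ}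

lemma borderedMinor_map (f : R →+* S) (A : Matrix (Fin n) (Fin n) R) (k : ℕ) (i j : Fin n) :
    borderedMinor (A.map f) k i j = f (borderedMinor A k i j) := by
  rw [borderedMinor, borderedMinor, RingHom.map_det]
  rfl

lemma cornerMinor_map (f : R →+* S) (A : Matrix (Fin n) (Fin n) R) (k : ℕ) (hk : k ≤ n) :
    cornerMinor (A.map f) k hk = f (cornerMinor A k hk) := by
  rw [cornerMinor, cornerMinor, RingHom.map_det]
  congr 1

lemma cornerMinor_one (k : ℕ) (hk : k ≤ n) :
    cornerMinor (1 : Matrix (Fin n) (Fin n) R) k hk = 1 := by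
  rw [cornerMinor, Matrix.submatrix_one _ (Fin.castLE_injective hk), Matrix.det_one]

end Transfer


section Helpers
variable {R : Type*} [CommRing R] {s t n : ℕ}

lemma borderedMinor_schur (B : Matrix (Fin n) (Fin n) R) (hs : s ≤ n) (a b : Fin n)
    [Invertible (B.submatrix (Fin.castLE hs) (Fin.castLE hs))] :
    borderedMinor B (s + 1) a b =
      (B.submatrix (Fin.castLE hs) (Fin.castLE hs)).det *
        (B a b - ∑ q : Fin s, (∑ p : Fin s, B a (Fin.castLE hs p) *
          (⅟(B.submatrix (Fin.castLE hs) (Fin.castLE hs))) p q) * B (Fin.castLE hs q) b) := by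
  set As := B.submatrix (Fin.castLE hs) (Fin.castLE hs) with hAs
  rw [borderedMinor, ← Matrix.det_submatrix_equiv_self (finSumFinEquiv : Fin s ⊕ Fin 1 ≃ Fin (s+1))]
  have hmat : ((Matrix.of fun p q : Fin (s+1) =>
      B (if (p : ℕ) < (s+1) - 1 then ⟨p % n, Nat.mod_lt _ a.pos⟩ else a)
        (if (q : ℕ) < (s+1) - 1 then ⟨q % n, Nat.mod_lt _ b.pos⟩ else b)).submatrix
        finSumFinEquiv finSumFinEquiv)
      = Matrix.fromBlocks As (Matrix.of fun p (_ : Fin 1) => B (Fin.castLE hs p) b)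
          (Matrix.of fun (_ : Fin 1) q => B a (Fin.castLE hs q))
          (Matrix.of fun (_ : Fin 1) (_ : Fin 1) => B a b) := by
    ext p q
    have key : ∀ r : Fin s, ((finSumFinEquiv (Sum.inl r) : Fin (s+1)) : ℕ) = (r : ℕ) := by
      intro r; simp
    have key2 : ∀ r : Fin 1, ((finSumFinEquiv (Sum.inr r) : Fin (s+1)) : ℕ) = s := by
      intro r; simp [Fin.fin_one_eq_zero r]
    rcases p with p | p <;> rcases q with q | q <;>
      simp only [Matrix.submatrix_apply, Matrix.of_apply, Matrix.fromBlocks,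
        Matrix.of_apply, Sum.elim_inl, Sum.elim_inr, key, key2, Nat.add_sub_cancel]
    · rw [if_pos p.isLt, if_pos q.isLt, hAs]
      simp only [Matrix.submatrix_apply]
      congr 1 <;> apply Fin.ext <;>
        simp [Nat.mod_eq_of_lt (lt_of_lt_of_le (Fin.is_lt _) hs)]
    · rw [if_pos p.isLt, if_neg (lt_irrefl s)]
      congr 1; apply Fin.ext; simp [Nat.mod_eq_of_lt (lt_of_lt_of_le (Fin.is_lt _) hs)]
    · rw [if_neg (lt_irrefl s), if_pos q.isLt]
      congr 1; apply Fin.ext; simp [Nat.mod_eq_of_lt (lt_of_lt_of_le (Fin.is_lt _) hs)]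
    · rw [if_neg (lt_irrefl s), if_neg (lt_irrefl s)]
  rw [hmat, Matrix.det_fromBlocks₁₁]
  congr 1
  rw [Matrix.det_unique]
  simp [Matrix.mul_apply, Finset.sum_mul, hAs]

lemma corner_schur (B : Matrix (Fin n) (Fin n) R) (hst : s < t) (htn : t ≤ n) (hs : s ≤ n)
    [Invertible (B.submatrix (Fin.castLE hs) (Fin.castLE hs))] :
    (B.submatrix (Fin.castLE htn) (Fin.castLE htn)).det =
      (B.submatrix (Fin.castLE hs) (Fin.castLE hs)).det *
      ((Matrix.of fun i j : Fin (t-s) => B ⟨s + i, by have := i.isLt; omega⟩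
          ⟨s + j, by have := j.isLt; omega⟩) -
        (Matrix.of fun (i : Fin (t-s)) p => B ⟨s + i, by have := i.isLt; omega⟩ (Fin.castLE hs p)) *
          ⅟(B.submatrix (Fin.castLE hs) (Fin.castLE hs)) *
        (Matrix.of fun p (j : Fin (t-s)) => B (Fin.castLE hs p) ⟨s + j, by have := j.isLt; omega⟩)).det := by
  set As := B.submatrix (Fin.castLE hs) (Fin.castLE hs) with hAs
  set e2 : Fin s ⊕ Fin (t - s) ≃ Fin t := finSumFinEquiv.trans (finCongr (by omega)) with he2
  rw [← Matrix.det_submatrix_equiv_self e2, ← Matrix.det_fromBlocks₁₁]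
  congr 1
  ext p q
  have key : ∀ r : Fin s, ((e2 (Sum.inl r) : Fin t) : ℕ) = (r : ℕ) := by
    intro r; simp [he2]
  have key2 : ∀ r : Fin (t - s), ((e2 (Sum.inr r) : Fin t) : ℕ) = s + r := by
    intro r; simp [he2]
  rcases p with p | p <;> rcases q with q | q <;>
    simp only [Matrix.fromBlocks, Matrix.of_apply, Sum.elim_inl, Sum.elim_inr,
      Matrix.submatrix_apply, hAs] <;>
    congr 1 <;> apply Fin.ext <;> simp [key, key2]

lemma det_bordered_of_isUnit (B : Matrix (Fin n) (Fin n) R) (hst : s < t) (htn : t ≤ n)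
    (hu : IsUnit (cornerMinor B s (by omega))) :
    (Matrix.of fun i j : Fin (t - s) => borderedMinor B (s + 1)
        ⟨s + i, by have := i.isLt; omega⟩ ⟨s + j, by have := j.isLt; omega⟩).det
      = cornerMinor B s (by omega) ^ (t - s - 1) * cornerMinor B t htn := by
  have hs : s ≤ n := by omega
  set As : Matrix (Fin s) (Fin s) R := B.submatrix (Fin.castLE hs) (Fin.castLE hs) with hAs
  have hdet : IsUnit As.det := hu
  have : Invertible As.det := hdet.invertible
  have : Invertible As := As.invertibleOfDetInvertible
  set Bm : Matrix (Fin s) (Fin (t - s)) R :=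
    Matrix.of (fun p j => B (Fin.castLE hs p) ⟨s + j, by have := j.isLt; omega⟩) with hBm
  set Cm : Matrix (Fin (t - s)) (Fin s) R :=
    Matrix.of (fun i p => B ⟨s + i, by have := i.isLt; omega⟩ (Fin.castLE hs p)) with hCm
  set Dm : Matrix (Fin (t - s)) (Fin (t - s)) R :=
    Matrix.of (fun i j => B ⟨s + i, by have := i.isLt; omega⟩ ⟨s + j, by have := j.isLt; omega⟩) with hDm
  set S : Matrix (Fin (t - s)) (Fin (t - s)) R := Dm - Cm * ⅟As * Bm with hS
  have step1 : ∀ i j : Fin (t - s), borderedMinor B (s + 1)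
      ⟨s + i, by have := i.isLt; omega⟩ ⟨s + j, by have := j.isLt; omega⟩ = As.det * S i j := by
    intro i j
    rw [borderedMinor_schur B hs ⟨s + i, by have := i.isLt; omega⟩ ⟨s + j, by have := j.isLt; omega⟩]
    have : S i j = Dm i j - ∑ q : Fin s, (∑ p : Fin s, Cm i p * (⅟As) p q) * Bm q j := by
      simp [hS, Matrix.sub_apply, Matrix.mul_apply, Finset.sum_mul]
    rw [this]
    rfl
  have step2 : cornerMinor B t htn = As.det * S.det := by
    rw [cornerMinor]
    exact corner_schur B hst htn hs
  have hM : (Matrix.of fun i j : Fin (t - s) => borderedMinor B (s + 1)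
      ⟨s + i, by have := i.isLt; omega⟩ ⟨s + j, by have := j.isLt; omega⟩) = As.det • S := by
    ext i j
    simp [step1]
  rw [hM, Matrix.det_smul, step2]
  have hcs : cornerMinor B s (by omega : s ≤ n) = As.det := rfl
  rw [hcs]
  rw [show Fintype.card (Fin (t - s)) = (t - s - 1) + 1 by simp; omega, pow_succ]
  ring

end Helpers


section Main
variable {R : Type*} [CommRing R] {s t n : ℕ}

lemma det_borderedMinorMatrix (A : Matrix (Fin n) (Fin n) R) (hst : s < t) (htn : t ≤ n) :
    (Matrix.of fun i j : Fin (t - s) => borderedMinor A (s + 1)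
        ⟨s + i, by have := i.isLt; omega⟩ ⟨s + j, by have := j.isLt; omega⟩).det
      = cornerMinor A s (by omega) ^ (t - s - 1) * cornerMinor A t htn := by
  classical
  set Rp := MvPolynomial (Fin n × Fin n) ℤ with hRp
  set G : Matrix (Fin n) (Fin n) Rp := Matrix.of fun i j => MvPolynomial.X (i, j) with hG
  set φ : Rp →+* R := (MvPolynomial.aeval (fun p : Fin n × Fin n => A p.1 p.2)).toRingHom with hφ
  have hGA : G.map φ = A := by
    ext i j
    show (MvPolynomial.aeval fun p : Fin n × Fin n => A p.1 p.2) (MvPolynomial.X (i, j)) = A i j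
    rw [MvPolynomial.aeval_X]
  -- nonvanishing of the generic corner minor
  have hδ : cornerMinor G s (by omega : s ≤ n) ≠ 0 := by
    intro h
    have h2 := congrArg (MvPolynomial.eval
      (fun p : Fin n × Fin n => if p.1 = p.2 then (1 : ℤ) else 0)) h
    rw [← cornerMinor_map (MvPolynomial.eval _) G s (by omega)] at h2
    have hG1 : G.map (MvPolynomial.eval
        (fun p : Fin n × Fin n => if p.1 = p.2 then (1 : ℤ) else 0) : Rp →+* ℤ)
        = (1 : Matrix (Fin n) (Fin n) ℤ) := by
      ext i j
      by_cases hij : i = j <;> simp [hG, Matrix.map_apply, Matrix.one_apply, hij]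
    rw [hG1, cornerMinor_one] at h2
    simp at h2
  -- generic identity, proved in the fraction field
  have hgen : (Matrix.of fun i j : Fin (t - s) => borderedMinor G (s + 1)
        ⟨s + i, by have := i.isLt; omega⟩ ⟨s + j, by have := j.isLt; omega⟩).det
      = cornerMinor G s (by omega) ^ (t - s - 1) * cornerMinor G t htn := by
    set K := FractionRing Rp with hK
    set ψ : Rp →+* K := algebraMap Rp K with hψ
    have hinj : Function.Injective ψ := IsFractionRing.injective Rp K
    apply hinj
    rw [_root_.map_mul, map_pow, ← cornerMinor_map ψ G s (by omega), ← cornerMinor_map ψ G t htn,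
      RingHom.map_det, RingHom.mapMatrix_apply]
    have hmat : (Matrix.of fun i j : Fin (t - s) => borderedMinor G (s + 1)
        ⟨s + i, by have := i.isLt; omega⟩ ⟨s + j, by have := j.isLt; omega⟩).map ψ
        = Matrix.of fun i j : Fin (t - s) => borderedMinor (G.map ψ) (s + 1)
        ⟨s + i, by have := i.isLt; omega⟩ ⟨s + j, by have := j.isLt; omega⟩ := by
      ext i j
      simp [Matrix.map_apply, borderedMinor_map]
    rw [hmat]
    have hunit : IsUnit (cornerMinor (G.map ψ) s (by omega : s ≤ n)) := by
      rw [cornerMinor_map]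
      refine isUnit_iff_ne_zero.mpr ?_
      simp only [ne_eq, map_eq_zero_iff ψ hinj]
      exact hδ
    exact det_bordered_of_isUnit (G.map ψ) hst htn hunit
  have h3 := congrArg φ hgen
  rw [RingHom.map_det, RingHom.mapMatrix_apply, _root_.map_mul, map_pow,
    ← cornerMinor_map φ G s (by omega), ← cornerMinor_map φ G t htn, hGA] at h3
  rw [← h3]
  congr 1
  ext i j
  simp only [Matrix.map_apply, Matrix.of_apply]
  rw [← hGA, borderedMinor_map]

end Main

/-- `adj(A^{(s+1)}_t) · A^{(s+1)}_t = δ_s^{t-s-1} δ_t · I`, where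
`A^{(s+1)}_t` is the matrix of bordered `(s+1)`-minors of `A` with border
indices running over `s+1, …, t` (0-based: `s, …, t-1`). -/
theorem adjugate_mul_borderedMinorMatrix {R : Type*} [CommRing R] {n s t : ℕ}
    (A : Matrix (Fin n) (Fin n) R) (hst : s < t) (htn : t ≤ n) :
    let M : Matrix (Fin (t - s)) (Fin (t - s)) R :=
      Matrix.of fun i j => borderedMinor A (s + 1)
        ⟨s + i, by have := i.isLt; omega⟩ ⟨s + j, by have := j.isLt; omega⟩
    M.adjugate * M
      = (cornerMinor A s (by omega) ^ (t - s - 1) * cornerMinor A t htn) • 1 := by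
  intro M
  rw [Matrix.adjugate_mul, det_borderedMinorMatrix A hst htn]
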